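/- Let A be an n×m matrix over F₂, y ∈ F₂ⁿ, k a positive integer, and γ' > γ ≥ 1 real numbers with (k : ℝ) ≥ γ/(γ'−γ). Define A' ∈ F₂^{(n+1)×(m+1)} as the block matrix [[A, 1_n + y],[0_{1×m}, 1]]; that is, the first m columns of A' are the columns of A extended by a final 0 entry, and the last column is (1_n + y)∘1. Then: (1) if there exists x ∈ F₂^m with ‖x‖₀ ≤ k and A·x = y, then there exists x' ∈ F₂^{m+1} with ‖x'‖₀ ≤ k+1 and A'·x' = 1_{n+1}; and (2) if A·x ≠ y for every x ∈ F₂^m with ‖x‖₀ ≤ γ'·k, then every x' ∈ F₂^{m+1} with A'·x' = 1_{n+1} satisfies ‖x'‖₀ > γ·(k+1). -/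
import Mathlib

lemma ham_sum {α β : Type*} [Fintype α] [Fintype β] (f : α ⊕ β → ZMod 2) :
    hammingNorm f = hammingNorm (f ∘ Sum.inl) + hammingNorm (f ∘ Sum.inr) := by
  simp only [hammingNorm, Finset.card_filter, Fintype.sum_sum_type]
  rfl

theorem stmt18 (n m k : ℕ) (hn : 0 < n) (hm : 0 < m) (hk : 0 < k)
    (γ γ' : ℝ) (hγ : 1 ≤ γ) (hγγ' : γ < γ')
    (hkγ : (k : ℝ) ≥ γ / (γ' - γ))
    (A : Matrix (Fin n) (Fin m) (ZMod 2)) (y : Fin n → ZMod 2)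
    (A' : Matrix (Fin n ⊕ Unit) (Fin m ⊕ Unit) (ZMod 2))
    (hA' : A' = Matrix.of fun i j =>
      match i, j with
      | Sum.inl i, Sum.inl j => A i j
      | Sum.inl i, Sum.inr _ => 1 + y i
      | Sum.inr _, Sum.inl _ => 0
      | Sum.inr _, Sum.inr _ => 1) :
    ((∃ x : Fin m → ZMod 2, hammingNorm x ≤ k ∧ A.mulVec x = y) →
      ∃ x' : Fin m ⊕ Unit → ZMod 2, hammingNorm x' ≤ k + 1 ∧
        A'.mulVec x' = fun _ => 1) ∧
    ((∀ x : Fin m → ZMod 2, (hammingNorm x : ℝ) ≤ γ' * k → A.mulVec x ≠ y) →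
      ∀ x' : Fin m ⊕ Unit → ZMod 2, A'.mulVec x' = (fun _ => 1) →
        γ * (k + 1) < (hammingNorm x' : ℝ)) := by
  have hmul : ∀ x' : Fin m ⊕ Unit → ZMod 2,
      (∀ i : Fin n, A'.mulVec x' (Sum.inl i)
        = A.mulVec (x' ∘ Sum.inl) i + (1 + y i) * x' (Sum.inr ())) ∧
      A'.mulVec x' (Sum.inr ()) = x' (Sum.inr ()) := by
    intro x'
    constructor
    · intro i
      simp [hA', Matrix.mulVec, dotProduct, Fintype.sum_sum_type]
    · simp [hA', Matrix.mulVec, dotProduct, Fintype.sum_sum_type]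
  constructor
  · rintro ⟨x, hx, hAx⟩
    refine ⟨Sum.elim x (fun _ => 1), ?_, ?_⟩
    · rw [ham_sum]
      have : hammingNorm ((Sum.elim x (fun _ : Unit => (1 : ZMod 2))) ∘ Sum.inr) ≤ 1 := by
        simp [hammingNorm, Finset.card_filter]
      have h1 : (Sum.elim x (fun _ : Unit => (1 : ZMod 2))) ∘ Sum.inl = x := rfl
      rw [h1]; omega
    · funext i
      obtain ⟨h1, h2⟩ := hmul (Sum.elim x (fun _ => 1))
      cases i with
      | inl i =>
        rw [h1 i]
        have : (Sum.elim x fun _ : Unit => (1 : ZMod 2)) ∘ Sum.inl = x := rfl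
        rw [this, hAx]
        simp only [Sum.elim_inr]
        have htwo : ∀ a : ZMod 2, a + a = 0 := by decide
        linear_combination htwo (y i)
      | inr u => simpa using h2
  · intro h x' hx'
    obtain ⟨h1, h2⟩ := hmul x'
    have hlast : x' (Sum.inr ()) = 1 := by rw [← h2, hx']
    have hAx : A.mulVec (x' ∘ Sum.inl) = y := by
      funext i
      have := h1 i
      rw [hx'] at this
      simp only [hlast, mul_one] at this
      have hneg : ∀ a : ZMod 2, -a = a := by decide
      have h2 : A.mulVec (x' ∘ Sum.inl) i = 1 - (1 + y i) := eq_sub_of_add_eq this.symm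
      rw [h2, show (1:ZMod 2) - (1 + y i) = -(y i) by ring, hneg]
    have hbig : ¬ ((hammingNorm (x' ∘ Sum.inl) : ℝ) ≤ γ' * k) := fun hc => h _ hc hAx
    push_neg at hbig
    have hham : (hammingNorm x' : ℝ) = hammingNorm (x' ∘ Sum.inl) + hammingNorm (x' ∘ Sum.inr) := by
      rw [ham_sum]; push_cast; ring
    have hpos : (0:ℝ) ≤ (hammingNorm (x' ∘ Sum.inr) : ℝ) := by positivity
    have hγ'pos : 0 < γ' - γ := by linarith
    have hkey : γ ≤ (k:ℝ) * (γ' - γ) := by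
      rw [ge_iff_le, div_le_iff₀ hγ'pos] at hkγ; linarith
    rw [hham]
    nlinarith [hbig, hpos, hkey]
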